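/- Let P = {I_1, …, I_m}, Q, and S be partitions in a set A whose supports R(P), R(Q), R(S) are pairwise disjoint. Then in the free vector space V on partitions in A, (P ∘ Q) ∘ S = P ∘ (Q ∘ S) + Σ_{1 ≤ a, b ≤ m, a ≠ b} Σ_{ι : I_a → Q} Σ_{μ : I_b → S} (P ∘_a^ι Q) ∘_b^μ S, where (P ∘_a^ι Q) ∘_b^μ S denotes the insertion of S at the member I_b of P ∘_a^ι Q via μ. -/

import Mathlib

set_option linter.unusedSectionVars false
set_option linter.unusedVariables false
set_option maxHeartbeats 1000000


namespace PartitionOps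

variable {α : Type*} [DecidableEq α]

/-- The support `R(P)` of a collection of finite sets: the union of its members. -/
def supp (P : Finset (Finset α)) : Finset α := P.sup id

/-- A partition in `A`: a finite collection of pairwise disjoint nonempty finite sets. -/
def IsPartition (P : Finset (Finset α)) : Prop :=
  (∀ I ∈ P, I.Nonempty) ∧ ∀ I ∈ P, ∀ I' ∈ P, I ≠ I' → Disjoint I I'

/-- The restriction `P_(B) = { I ∩ B : I ∈ P, I ∩ B ≠ ∅ }`. -/
def restrict (P : Finset (Finset α)) (B : Finset α) : Finset (Finset α) :=
  (P.filter fun I => (I ∩ B).Nonempty).image (· ∩ B)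

/-- `R_{P,B}`: the union of the members of `P` meeting `B`. -/
def RB (P : Finset (Finset α)) (B : Finset α) : Finset α :=
  (P.filter fun I => (I ∩ B).Nonempty).sup id

/-- The quotient `P / P_(B)`: the members of `P` disjoint from `B`, together with
`R_{P,B} \ B` (omitted when empty). -/
def quot (P : Finset (Finset α)) (B : Finset α) : Finset (Finset α) :=
  (insert (RB P B \ B) (P.filter fun I => I ∩ B = ∅)).erase ∅

/-- Quotient of `P` by a partition `Q` (meaningful when `Q` coincides with the
restriction of `P` to the support of `Q`): `P / Q := P / P_(R(Q))`. -/
def quotBy (P Q : Finset (Finset α)) : Finset (Finset α) := quot P (supp Q)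

/-- The preimage `ι⁻¹(J) ⊆ B` of a member `J` under a map `ι` defined on `B`. -/
def fiber (B : Finset α) (f : {x // x ∈ B} → Finset α) (J : Finset α) : Finset α :=
  (B.attach.filter fun x => f x = J).image Subtype.val

/-- The insertion `P ∘ₐ^ι Q` of `Q` into `P` at the member `Ia` via `ι : Ia → Q`:
remove `Ia` from `P` and add the sets `J ∪ ι⁻¹(J)` for the members `J` of `Q`. -/
def ins (P : Finset (Finset α)) (Ia : Finset α) (Q : Finset (Finset α))
    (ι : {x // x ∈ Ia} → {J // J ∈ Q}) : Finset (Finset α) :=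
  P.erase Ia ∪ Q.image fun J => J ∪ fiber Ia (fun x => (ι x : Finset α)) J

lemma mem_fiber {B : Finset α} {f : {x // x ∈ B} → Finset α} {J : Finset α} {x : α} :
    x ∈ fiber B f J ↔ ∃ h : x ∈ B, f ⟨x, h⟩ = J := by
  simp only [fiber, Finset.mem_image, Finset.mem_filter, Finset.mem_attach, true_and]
  constructor
  · rintro ⟨⟨a, ha⟩, hfa, rfl⟩; exact ⟨ha, hfa⟩
  · rintro ⟨h, hf⟩; exact ⟨⟨x, h⟩, hf, rfl⟩

lemma fiber_subset {B : Finset α} {f : {x // x ∈ B} → Finset α} {J : Finset α} :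
    fiber B f J ⊆ B := by
  intro x hx; exact (mem_fiber.mp hx).1

lemma subset_supp {P : Finset (Finset α)} {I : Finset α} (h : I ∈ P) : I ⊆ supp P :=
  Finset.le_sup (f := id) h

lemma union_sdiff_eq_left {X J' W : Finset α} (hX : X ⊆ W) (hd : Disjoint J' W) :
    (J' ∪ X) \ W = J' := by
  rw [Finset.union_sdiff_distrib, Finset.sdiff_eq_empty_iff_subset.mpr hX,
    Finset.sdiff_eq_self_iff_disjoint.mpr hd, Finset.union_empty]

lemma union_inter_eq_left {K Y W : Finset α} (hK : K ⊆ W) (hd : Disjoint Y W) :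
    (K ∪ Y) ∩ W = K := by
  rw [Finset.union_inter_distrib_right, Finset.inter_eq_left.mpr hK,
    Finset.disjoint_iff_inter_eq_empty.mp hd, Finset.union_empty]

lemma not_subset_of_sep {W1 W2 : Finset α} (hd : Disjoint W1 W2) {N M : Finset α}
    (hN : N ⊆ W1) (hNne : N.Nonempty) (hM : M ⊆ W2) : ¬ N ⊆ M := by
  intro h
  obtain ⟨y, hy⟩ := hNne
  exact Finset.disjoint_left.mp hd (hN hy) (hM (h hy))

theorem master {P Q S : Finset (Finset α)}
    (hP : IsPartition P) (hQ : IsPartition Q) (hS : IsPartition S)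
    (hPQ : Disjoint (supp P) (supp Q)) (hPS : Disjoint (supp P) (supp S))
    (hQS : Disjoint (supp Q) (supp S))
    {Ia : Finset α} (hIa : Ia ∈ P) {J : Finset α} (hJ : J ∈ Q)
    (ι : {x // x ∈ Ia} → {J' // J' ∈ Q})
    (μ : {y // y ∈ J ∪ fiber Ia (fun x => (ι x : Finset α)) J} → {K // K ∈ S})
    (κ : {y // y ∈ J} → {K // K ∈ S})
    (ι' : {x // x ∈ Ia} → {M // M ∈ ins Q J S κ})
    (hκ : ∀ (y : α) (hy : y ∈ J),
      (κ ⟨y, hy⟩ : Finset α) = μ ⟨y, Finset.mem_union_left _ hy⟩)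
    (hι'1 : ∀ x, (ι x : Finset α) ≠ J → (ι' x : Finset α) = ι x)
    (hι'2 : ∀ (x : {x // x ∈ Ia}) (hx : (ι x : Finset α) = J),
      (ι' x : Finset α) =
        (μ ⟨x.1, Finset.mem_union_right _ (mem_fiber.mpr ⟨x.2, hx⟩)⟩ : Finset α) ∪
          fiber J (fun y => (κ y : Finset α))
            (μ ⟨x.1, Finset.mem_union_right _ (mem_fiber.mpr ⟨x.2, hx⟩)⟩)) :
    ins (ins P Ia Q ι) (J ∪ fiber Ia (fun x => (ι x : Finset α)) J) S μ
      = ins P Ia (ins Q J S κ) ι' := by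
  have hIaP : Ia ⊆ supp P := subset_supp hIa
  have hJQ : J ⊆ supp Q := subset_supp hJ
  -- recover J' from J' ∪ fiber
  have hA : ∀ J' ∈ Q, (J' ∪ fiber Ia (fun x => (ι x : Finset α)) J') \ supp P = J' := by
    intro J' hJ'
    exact union_sdiff_eq_left (fiber_subset.trans hIaP)
      (hPQ.symm.mono_left (subset_supp hJ'))
  have hginj : ∀ J' ∈ Q, ∀ J'' ∈ Q,
      J' ∪ fiber Ia (fun x => (ι x : Finset α)) J' = J'' ∪ fiber Ia (fun x => (ι x : Finset α)) J''
        → J' = J'' := by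
    intro J' hJ' J'' hJ'' h
    rw [← hA J' hJ', ← hA J'' hJ'', h]
  -- J ∪ F is not an old member of P
  have hB : J ∪ fiber Ia (fun x => (ι x : Finset α)) J ∉ P.erase Ia := by
    intro hmem
    obtain ⟨y, hy⟩ := hQ.1 J hJ
    exact Finset.disjoint_left.mp hPQ
      (subset_supp (Finset.mem_of_mem_erase hmem) (Finset.mem_union_left _ hy)) (hJQ hy)
  -- erase commutes with the image over Q
  have hC : ((Q.image fun J' => J' ∪ fiber Ia (fun x => (ι x : Finset α)) J').erase
        (J ∪ fiber Ia (fun x => (ι x : Finset α)) J))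
      = (Q.erase J).image fun J' => J' ∪ fiber Ia (fun x => (ι x : Finset α)) J' := by
    ext M
    constructor
    · intro hM
      obtain ⟨hne, hM⟩ := Finset.mem_erase.mp hM
      obtain ⟨J', hJ', rfl⟩ := Finset.mem_image.mp hM
      exact Finset.mem_image.mpr
        ⟨J', Finset.mem_erase.mpr ⟨fun h => hne (by rw [h]), hJ'⟩, rfl⟩
    · intro hM
      obtain ⟨J', hJ', rfl⟩ := Finset.mem_image.mp hM
      obtain ⟨hne, hJ'Q⟩ := Finset.mem_erase.mp hJ'
      exact Finset.mem_erase.mpr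
        ⟨fun h => hne (hginj _ hJ'Q _ hJ h), Finset.mem_image.mpr ⟨J', hJ'Q, rfl⟩⟩
  -- fibers under ι' agree with fibers under ι away from J
  have hD : ∀ J' ∈ Q.erase J,
      fiber Ia (fun x => (ι' x : Finset α)) J' = fiber Ia (fun x => (ι x : Finset α)) J' := by
    intro J' hJ'e
    obtain ⟨hJ'ne, hJ'Q⟩ := Finset.mem_erase.mp hJ'e
    ext z
    simp only [mem_fiber]
    constructor
    · rintro ⟨hz, hval⟩
      refine ⟨hz, ?_⟩
      by_cases hc : (ι ⟨z, hz⟩ : Finset α) = J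
      · exfalso
        have h2 := hι'2 ⟨z, hz⟩ hc
        have hK0 : (μ ⟨z, Finset.mem_union_right _ (mem_fiber.mpr ⟨hz, hc⟩)⟩ : Finset α) ∈ S :=
          (μ _).2
        have hsub : (μ ⟨z, Finset.mem_union_right _ (mem_fiber.mpr ⟨hz, hc⟩)⟩ : Finset α) ⊆ J' := by
          rw [← hval, h2]; exact Finset.subset_union_left
        exact not_subset_of_sep hQS.symm (subset_supp hK0) (hS.1 _ hK0)
          (subset_supp hJ'Q) hsub
      · rw [hι'1 ⟨z, hz⟩ hc] at hval; exact hval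
    · rintro ⟨hz, hval⟩
      have hc : (ι ⟨z, hz⟩ : Finset α) ≠ J := by rw [hval]; exact hJ'ne
      exact ⟨hz, by rw [hι'1 ⟨z, hz⟩ hc]; exact hval⟩
  -- the new members coming from S agree
  have hE : ∀ K ∈ S,
      (K ∪ fiber J (fun y => (κ y : Finset α)) K) ∪
          fiber Ia (fun x => (ι' x : Finset α)) (K ∪ fiber J (fun y => (κ y : Finset α)) K)
        = K ∪ fiber (J ∪ fiber Ia (fun x => (ι x : Finset α)) J) (fun y => (μ y : Finset α)) K := by
    intro K hK
    have hfibJS : ∀ K' : Finset α,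
        Disjoint (fiber J (fun y => (κ y : Finset α)) K') (supp S) :=
      fun K' => hQS.mono_left (fiber_subset.trans hJQ)
    ext z
    constructor
    · intro hz0
      rcases Finset.mem_union.mp hz0 with hz1 | hz2
      · rcases Finset.mem_union.mp hz1 with hz | hzf
        · exact Finset.mem_union_left _ hz
        · obtain ⟨hzJ, hκz⟩ := mem_fiber.mp hzf
          refine Finset.mem_union_right _ (mem_fiber.mpr ⟨Finset.mem_union_left _ hzJ, ?_⟩)
          rw [← hκ z hzJ]; exact hκz
      · obtain ⟨hzIa, hι'z⟩ := mem_fiber.mp hz2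
        by_cases hc : (ι ⟨z, hzIa⟩ : Finset α) = J
        · have hxF : z ∈ J ∪ fiber Ia (fun x => (ι x : Finset α)) J :=
            Finset.mem_union_right _ (mem_fiber.mpr ⟨hzIa, hc⟩)
          have h2 := hι'2 ⟨z, hzIa⟩ hc
          have heq : (μ ⟨z, hxF⟩ : Finset α) ∪
              fiber J (fun y => (κ y : Finset α)) (μ ⟨z, hxF⟩)
                = K ∪ fiber J (fun y => (κ y : Finset α)) K := by
            rw [← h2]; exact hι'z
          have hμK : (μ ⟨z, hxF⟩ : Finset α) = K := by
            have e1 : ((μ ⟨z, hxF⟩ : Finset α) ∪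
                fiber J (fun y => (κ y : Finset α)) (μ ⟨z, hxF⟩)) ∩ supp S
                  = (μ ⟨z, hxF⟩ : Finset α) :=
              union_inter_eq_left (subset_supp (μ ⟨z, hxF⟩).2) (hfibJS _)
            have e2 : (K ∪ fiber J (fun y => (κ y : Finset α)) K) ∩ supp S = K :=
              union_inter_eq_left (subset_supp hK) (hfibJS _)
            rw [← e1, heq, e2]
          exact Finset.mem_union_right _ (mem_fiber.mpr ⟨hxF, hμK⟩)
        · exfalso
          have hval := hι'1 ⟨z, hzIa⟩ hc
          have hsub : K ⊆ (ι ⟨z, hzIa⟩ : Finset α) := by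
            rw [← hval, hι'z]; exact Finset.subset_union_left
          exact not_subset_of_sep hQS.symm (subset_supp hK) (hS.1 _ hK)
            (subset_supp (ι ⟨z, hzIa⟩).2) hsub
    · intro hz0
      rcases Finset.mem_union.mp hz0 with hz | hzf
      · exact Finset.mem_union_left _ (Finset.mem_union_left _ hz)
      obtain ⟨hzJF, hμz⟩ := mem_fiber.mp hzf
      by_cases hzJ : z ∈ J
      · refine Finset.mem_union_left _ (Finset.mem_union_right _ (mem_fiber.mpr ⟨hzJ, ?_⟩))
        rw [hκ z hzJ]
        exact hμz
      · have hzF := (Finset.mem_union.mp hzJF).resolve_left hzJ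
        obtain ⟨hzIa, hc⟩ := mem_fiber.mp hzF
        refine Finset.mem_union_right _ (mem_fiber.mpr ⟨hzIa, ?_⟩)
        rw [hι'2 ⟨z, hzIa⟩ hc]
        have hμK : (μ ⟨z, Finset.mem_union_right _ (mem_fiber.mpr ⟨hzIa, hc⟩)⟩ : Finset α) = K :=
          hμz
        rw [hμK]
  -- now assemble
  show ((P.erase Ia ∪ Q.image fun J' => J' ∪ fiber Ia (fun x => (ι x : Finset α)) J').erase
        (J ∪ fiber Ia (fun x => (ι x : Finset α)) J)) ∪ _ = _
  rw [Finset.erase_union_distrib, Finset.erase_eq_of_notMem hB, hC]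
  show P.erase Ia ∪ _ ∪ _ = P.erase Ia ∪ (Q.erase J ∪ _).image _
  rw [Finset.image_union, Finset.image_image, Finset.union_assoc]
  congr 1
  congr 1
  · exact Finset.image_congr fun J' hJ' => by
      show J' ∪ fiber Ia (fun x => (ι x : Finset α)) J'
          = J' ∪ fiber Ia (fun x => (ι' x : Finset α)) J'
      rw [hD J' hJ']
  · exact (Finset.image_congr fun K hK => (hE K hK).symm)



section Key

variable {P Q S : Finset (Finset α)} {Ia J : Finset α}

/-- Restrict `μ : J ∪ F → S` to `κ : J → S`. -/
def toKappa (ι : {x // x ∈ Ia} → {J' // J' ∈ Q})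
    (μ : {y // y ∈ J ∪ fiber Ia (fun x => (ι x : Finset α)) J} → {K // K ∈ S}) :
    {y // y ∈ J} → {K // K ∈ S} :=
  fun y => μ ⟨y.1, Finset.mem_union_left _ y.2⟩

/-- Assemble `ι' : Ia → ins Q J S κ` out of `ι` and `μ`. -/
def toIota' (hJ : J ∈ Q) (ι : {x // x ∈ Ia} → {J' // J' ∈ Q})
    (μ : {y // y ∈ J ∪ fiber Ia (fun x => (ι x : Finset α)) J} → {K // K ∈ S}) :
    {x // x ∈ Ia} → {M // M ∈ ins Q J S (toKappa ι μ)} := fun x =>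
  if hc : (ι x : Finset α) = J then
    ⟨(μ ⟨x.1, Finset.mem_union_right _ (mem_fiber.mpr ⟨x.2, hc⟩)⟩ : Finset α) ∪
        fiber J (fun y => ((toKappa ι μ) y : Finset α))
          (μ ⟨x.1, Finset.mem_union_right _ (mem_fiber.mpr ⟨x.2, hc⟩)⟩),
      Finset.mem_union_right _ (Finset.mem_image.mpr
        ⟨_, (μ ⟨x.1, Finset.mem_union_right _ (mem_fiber.mpr ⟨x.2, hc⟩)⟩).2, rfl⟩)⟩
  else ⟨(ι x : Finset α), Finset.mem_union_left _ (Finset.mem_erase.mpr ⟨hc, (ι x).2⟩)⟩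

lemma ins_mem_cases (hQS : Disjoint (supp Q) (supp S)) (hJ : J ∈ Q)
    {κ : {y // y ∈ J} → {K // K ∈ S}} {M : Finset α}
    (hM : M ∈ ins Q J S κ) (hM' : M ∉ Q.erase J) :
    (M ∩ supp S) ∈ S ∧
      M = (M ∩ supp S) ∪ fiber J (fun y => (κ y : Finset α)) (M ∩ supp S) := by
  rcases Finset.mem_union.mp hM with h | h
  · exact absurd h hM'
  obtain ⟨K, hK, rfl⟩ := Finset.mem_image.mp h
  have he : (K ∪ fiber J (fun y => (κ y : Finset α)) K) ∩ supp S = K :=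
    union_inter_eq_left (subset_supp hK) (hQS.mono_left (fiber_subset.trans (subset_supp hJ)))
  rw [he]
  exact ⟨hK, rfl⟩

/-- Recover `ι : Ia → Q` from `ι' : Ia → ins Q J S κ`. -/
def backIota (hJ : J ∈ Q) (κ : {y // y ∈ J} → {K // K ∈ S})
    (ι' : {x // x ∈ Ia} → {M // M ∈ ins Q J S κ}) :
    {x // x ∈ Ia} → {J' // J' ∈ Q} := fun x =>
  if hc : (ι' x : Finset α) ∈ Q.erase J then ⟨(ι' x : Finset α), Finset.mem_of_mem_erase hc⟩
  else ⟨J, hJ⟩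

/-- Recover `μ : J ∪ F → S` from `κ` and `ι'`. -/
def backMu (hQS : Disjoint (supp Q) (supp S)) (hJ : J ∈ Q)
    (κ : {y // y ∈ J} → {K // K ∈ S})
    (ι' : {x // x ∈ Ia} → {M // M ∈ ins Q J S κ}) :
    {y // y ∈ J ∪ fiber Ia (fun x => ((backIota hJ κ ι') x : Finset α)) J} → {K // K ∈ S} :=
  fun y =>
  if hy : y.1 ∈ J then κ ⟨y.1, hy⟩
  else
    have hyF : y.1 ∈ fiber Ia (fun x => ((backIota hJ κ ι') x : Finset α)) J :=
      (Finset.mem_union.mp y.2).resolve_left hy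
    have hyIa : y.1 ∈ Ia := fiber_subset hyF
    have hnc : (ι' ⟨y.1, hyIa⟩ : Finset α) ∉ Q.erase J := by
      intro hcon
      obtain ⟨h, hval⟩ := mem_fiber.mp hyF
      rw [backIota, dif_pos hcon] at hval
      exact (Finset.mem_erase.mp hcon).1 hval
    ⟨(ι' ⟨y.1, hyIa⟩ : Finset α) ∩ supp S,
      (ins_mem_cases hQS hJ (ι' ⟨y.1, hyIa⟩).2 hnc).1⟩

lemma sigma_eq {T : Type*} {F : T → Type*} {a b : T} (x : F a) (y : F b)
    (h : a = b) (h2 : HEq x y) : (⟨a, x⟩ : Sigma F) = ⟨b, y⟩ := by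
  subst h; exact congrArg _ (eq_of_heq h2)

lemma mu_hcongr {A B : Finset α} {W : Type*} (h : A = B) (f : {y // y ∈ A} → W)
    (g : {y // y ∈ B} → W)
    (hfg : ∀ (y : α) (hA : y ∈ A) (hB : y ∈ B), f ⟨y, hA⟩ = g ⟨y, hB⟩) : HEq f g := by
  subst h; exact heq_of_eq (funext fun y => hfg y.1 y.2 y.2)

lemma iota'_hcongr {X Y : Finset (Finset α)} {D : Type*} (h : X = Y)
    (f : D → {M // M ∈ X}) (g : D → {M // M ∈ Y})
    (hfg : ∀ x, (f x : Finset α) = (g x : Finset α)) : HEq f g := by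
  subst h; exact heq_of_eq (funext fun x => Subtype.ext (hfg x))



set_option maxHeartbeats 2000000 in
lemma key (Kf : Type*) [Field Kf]
    (hP : IsPartition P) (hQ : IsPartition Q) (hS : IsPartition S)
    (hPQ : Disjoint (supp P) (supp Q)) (hPS : Disjoint (supp P) (supp S))
    (hQS : Disjoint (supp Q) (supp S)) (hIa : Ia ∈ P) (hJ : J ∈ Q) :
    (∑ ι : {x // x ∈ Ia} → {J' // J' ∈ Q},
        ∑ μ : {y // y ∈ J ∪ fiber Ia (fun x => (ι x : Finset α)) J} → {K // K ∈ S},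
          Finsupp.single (ins (ins P Ia Q ι)
            (J ∪ fiber Ia (fun x => (ι x : Finset α)) J) S μ) (1 : Kf))
      = ∑ κ : {y // y ∈ J} → {K // K ∈ S},
          ∑ ι' : {x // x ∈ Ia} → {M // M ∈ ins Q J S κ},
            Finsupp.single (ins P Ia (ins Q J S κ) ι') (1 : Kf) := by
  rw [Finset.sum_sigma' Finset.univ, Finset.sum_sigma' Finset.univ]
  refine Finset.sum_bij'
    (fun p _ => (⟨toKappa p.1 p.2, toIota' hJ p.1 p.2⟩ :
      Σ κ : {y // y ∈ J} → {K // K ∈ S}, {x // x ∈ Ia} → {M // M ∈ ins Q J S κ}))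
    (fun q _ => (⟨backIota hJ q.1 q.2, backMu hQS hJ q.1 q.2⟩ :
      Σ ι : {x // x ∈ Ia} → {J' // J' ∈ Q},
        {y // y ∈ J ∪ fiber Ia (fun x => (ι x : Finset α)) J} → {K // K ∈ S}))
    (fun _ _ => Finset.mem_sigma.mpr ⟨Finset.mem_univ _, Finset.mem_univ _⟩)
    (fun _ _ => Finset.mem_sigma.mpr ⟨Finset.mem_univ _, Finset.mem_univ _⟩)
    ?_ ?_ ?_
  · -- left inverse
    rintro ⟨ι, μ⟩ -
    have h1 : backIota hJ (toKappa ι μ) (toIota' hJ ι μ) = ι := by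
      funext x
      apply Subtype.ext
      by_cases hc : (ι x : Finset α) = J
      · have hnotin : (toIota' hJ ι μ x : Finset α) ∉ Q.erase J := by
          intro hcon
          have hsub : (μ ⟨x.1, Finset.mem_union_right _ (mem_fiber.mpr ⟨x.2, hc⟩)⟩ : Finset α)
              ⊆ (toIota' hJ ι μ x : Finset α) := by
            simp only [toIota', dif_pos hc]
            exact Finset.subset_union_left
          exact not_subset_of_sep hQS.symm (subset_supp (μ _).2) (hS.1 _ (μ _).2)
            (subset_supp (Finset.mem_of_mem_erase hcon)) hsub
        simp only [backIota, dif_neg hnotin]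
        exact hc.symm
      · have hin : (toIota' hJ ι μ x : Finset α) ∈ Q.erase J := by
          simp only [toIota', dif_neg hc]
          exact Finset.mem_erase.mpr ⟨hc, (ι x).2⟩
        simp only [backIota, dif_pos hin, toIota', dif_neg hc]
        rw [dif_pos (Finset.mem_erase.mpr ⟨hc, (ι x).2⟩)]
    refine sigma_eq _ _ h1 ?_
    refine mu_hcongr (by rw [h1]) _ _ ?_
    intro y hA hB
    by_cases hy : y ∈ J
    · simp only [backMu, dif_pos hy, toKappa]
    · simp only [backMu, dif_neg hy]
      obtain ⟨hyIa, hcc⟩ := mem_fiber.mp ((Finset.mem_union.mp hB).resolve_left hy)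
      apply Subtype.ext
      show (toIota' hJ ι μ ⟨y, _⟩ : Finset α) ∩ supp S = (μ ⟨y, hB⟩ : Finset α)
      simp only [toIota', dif_pos hcc]
      exact union_inter_eq_left (subset_supp (μ _).2)
        (hQS.mono_left (fiber_subset.trans (subset_supp hJ)))
  · -- right inverse
    rintro ⟨κ, ι'⟩ -
    have h1 : toKappa (backIota hJ κ ι') (backMu hQS hJ κ ι') = κ := by
      funext y
      simp only [toKappa, backMu, dif_pos y.2]
    refine sigma_eq _ _ h1 ?_
    refine iota'_hcongr (by rw [h1]) _ _ ?_
    intro x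
    by_cases hcQ : (ι' x : Finset α) ∈ Q.erase J
    · have hne : ((backIota hJ κ ι') x : Finset α) ≠ J := by
        simp only [backIota, dif_pos hcQ]
        exact (Finset.mem_erase.mp hcQ).1
      simp only [toIota', dif_neg hne, backIota, dif_pos hcQ]
      rw [dif_neg (Finset.mem_erase.mp hcQ).1]
    · have heq : ((backIota hJ κ ι') x : Finset α) = J := by
        simp only [backIota, dif_neg hcQ]
      simp only [toIota', dif_pos heq]
      rw [h1]
      have hxJ : x.1 ∉ J := fun hin =>
        Finset.disjoint_left.mp hPQ (subset_supp hIa x.2) (subset_supp hJ hin)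
      simp only [backMu, dif_neg hxJ]
      exact (ins_mem_cases hQS hJ (ι' x).2 hcQ).2.symm
  · -- values agree
    rintro ⟨ι, μ⟩ -
    exact congrArg (fun t => Finsupp.single t (1 : Kf))
      (master hP hQ hS hPQ hPS hQS hIa hJ ι μ (toKappa ι μ) (toIota' hJ ι μ)
        (fun y hy => rfl)
        (fun x hne => by simp only [toIota', dif_neg hne])
        (fun x hx => by simp only [toIota', dif_pos hx]))

end Key

variable (Kf : Type*) [Field Kf] [CharZero Kf]

/-- The composition `P ∘ Q = Σ_{a} Σ_{ι : Iₐ → Q} P ∘ₐ^ι Q` of two partitions, as an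
element of the free vector space on the partitions in `A`. -/
noncomputable def partComp (P Q : Finset (Finset α)) : Finset (Finset α) →₀ Kf :=
  ∑ Ia ∈ P, ∑ ι : {x // x ∈ Ia} → {J // J ∈ Q},
    Finsupp.single (ins P Ia Q ι) (1 : Kf)

/-- The bilinear extension of the composition to the free vector space. -/
noncomputable def compV (x y : Finset (Finset α) →₀ Kf) : Finset (Finset α) →₀ Kf :=
  x.sum fun P c => y.sum fun Q d => (c * d) • partComp Kf P Q


lemma compV_single_single (P S : Finset (Finset α)) (c d : Kf) :
    compV Kf (Finsupp.single P c) (Finsupp.single S d) = (c * d) • partComp Kf P S := by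
  unfold compV
  rw [Finsupp.sum_single_index, Finsupp.sum_single_index]
  · simp
  · simp [Finsupp.sum_single_index]

lemma compV_sum_left {ι' : Type*} (s : Finset ι') (f : ι' → (Finset (Finset α) →₀ Kf))
    (y : Finset (Finset α) →₀ Kf) :
    compV Kf (∑ i ∈ s, f i) y = ∑ i ∈ s, compV Kf (f i) y := by
  unfold compV
  rw [← Finsupp.sum_finsetSum_index]
  · intro i; simp
  · intro i x y'; simp [Finsupp.sum_add, add_mul, add_smul]

lemma compV_single_left (P : Finset (Finset α)) (y : Finset (Finset α) →₀ Kf) :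
    compV Kf (Finsupp.single P 1) y = y.sum fun Q d => d • partComp Kf P Q := by
  unfold compV
  rw [Finsupp.sum_single_index]
  · simp
  · simp

/-- for partitions `P`, `Q`, `S` with pairwise disjoint supports,
`(P ∘ Q) ∘ S = P ∘ (Q ∘ S) + Σ_{a ≠ b} Σ_{ι : Iₐ → Q} Σ_{μ : I_b → S}
(P ∘ₐ^ι Q) ∘_b^μ S` in the free vector space on the partitions in `A`. -/
theorem comp_comp (P Q S : Finset (Finset α))
    (hP : IsPartition P) (hQ : IsPartition Q) (hS : IsPartition S)
    (hPQ : Disjoint (supp P) (supp Q)) (hPS : Disjoint (supp P) (supp S))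
    (hQS : Disjoint (supp Q) (supp S)) :
    compV Kf (partComp Kf P Q) (Finsupp.single S 1) =
      compV Kf (Finsupp.single P 1) (partComp Kf Q S) +
        ∑ Ia ∈ P, ∑ Ib ∈ P.erase Ia,
          ∑ ι : {x // x ∈ Ia} → {J // J ∈ Q},
            ∑ μ : {x // x ∈ Ib} → {Kk // Kk ∈ S},
              Finsupp.single (ins (ins P Ia Q ι) Ib S μ) (1 : Kf) := by
  classical
  -- expand the left-hand side
  have hL : compV Kf (partComp Kf P Q) (Finsupp.single S 1)
      = ∑ Ia ∈ P, ∑ ι : {x // x ∈ Ia} → {J // J ∈ Q},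
          partComp Kf (ins P Ia Q ι) S := by
    rw [partComp, compV_sum_left]
    refine Finset.sum_congr rfl fun Ia _ => ?_
    rw [compV_sum_left]
    refine Finset.sum_congr rfl fun ι _ => ?_
    rw [compV_single_single]
    simp
  -- expand the right-hand side
  have hR : compV Kf (Finsupp.single P 1) (partComp Kf Q S)
      = ∑ J ∈ Q, ∑ κ : {y // y ∈ J} → {K // K ∈ S},
          partComp Kf P (ins Q J S κ) := by
    rw [compV_single_left, partComp, ← Finsupp.sum_finsetSum_index]
    · refine Finset.sum_congr rfl fun J _ => ?_
      rw [← Finsupp.sum_finsetSum_index]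
      · refine Finset.sum_congr rfl fun κ _ => ?_
        rw [Finsupp.sum_single_index] <;> simp
      · intro i; simp
      · intro i x y'; simp [add_smul]
    · intro i; simp
    · intro i x y'; simp [Finsupp.sum_add_index', add_smul, Finset.sum_add_distrib]
  -- split partComp (ins P Ia Q ι) S into the old members and the new members
  have hPart : ∀ Ia ∈ P, ∀ ι : {x // x ∈ Ia} → {J // J ∈ Q},
      partComp Kf (ins P Ia Q ι) S
        = (∑ Ib ∈ P.erase Ia, ∑ μ : {x // x ∈ Ib} → {Kk // Kk ∈ S},
            Finsupp.single (ins (ins P Ia Q ι) Ib S μ) (1 : Kf))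
          + ∑ J ∈ Q, ∑ μ : {y // y ∈ J ∪ fiber Ia (fun x => (ι x : Finset α)) J} → {Kk // Kk ∈ S},
              Finsupp.single (ins (ins P Ia Q ι)
                (J ∪ fiber Ia (fun x => (ι x : Finset α)) J) S μ) (1 : Kf) := by
    intro Ia hIa ι
    have hdisj : Disjoint (P.erase Ia)
        (Q.image fun J => J ∪ fiber Ia (fun x => (ι x : Finset α)) J) := by
      rw [Finset.disjoint_left]
      intro M hM hM'
      obtain ⟨J, hJ, rfl⟩ := Finset.mem_image.mp hM'
      exact not_subset_of_sep hPQ.symm (subset_supp hJ) (hQ.1 J hJ)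
        (subset_supp (Finset.mem_of_mem_erase hM)) Finset.subset_union_left
    have hinj : ∀ J' ∈ Q, ∀ J'' ∈ Q,
        J' ∪ fiber Ia (fun x => (ι x : Finset α)) J'
          = J'' ∪ fiber Ia (fun x => (ι x : Finset α)) J'' → J' = J'' := by
      intro J' hJ' J'' hJ'' h
      have hA : ∀ Jc ∈ Q, (Jc ∪ fiber Ia (fun x => (ι x : Finset α)) Jc) \ supp P = Jc :=
        fun Jc hJc => union_sdiff_eq_left (fiber_subset.trans (subset_supp hIa))
          (hPQ.symm.mono_left (subset_supp hJc))
      rw [← hA J' hJ', ← hA J'' hJ'', h]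
    rw [partComp, ins, Finset.sum_union hdisj, Finset.sum_image hinj]
  rw [hL]
  calc (∑ Ia ∈ P, ∑ ι : {x // x ∈ Ia} → {J // J ∈ Q}, partComp Kf (ins P Ia Q ι) S)
      = ∑ Ia ∈ P, ∑ ι : {x // x ∈ Ia} → {J // J ∈ Q},
          ((∑ Ib ∈ P.erase Ia, ∑ μ : {x // x ∈ Ib} → {Kk // Kk ∈ S},
            Finsupp.single (ins (ins P Ia Q ι) Ib S μ) (1 : Kf))
          + ∑ J ∈ Q, ∑ μ : {y // y ∈ J ∪ fiber Ia (fun x => (ι x : Finset α)) J} → {Kk // Kk ∈ S},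
              Finsupp.single (ins (ins P Ia Q ι)
                (J ∪ fiber Ia (fun x => (ι x : Finset α)) J) S μ) (1 : Kf)) :=
        Finset.sum_congr rfl fun Ia hIa => Finset.sum_congr rfl fun ι _ => hPart Ia hIa ι
    _ = (∑ Ia ∈ P, ∑ ι : {x // x ∈ Ia} → {J // J ∈ Q},
          ∑ Ib ∈ P.erase Ia, ∑ μ : {x // x ∈ Ib} → {Kk // Kk ∈ S},
            Finsupp.single (ins (ins P Ia Q ι) Ib S μ) (1 : Kf))
        + ∑ Ia ∈ P, ∑ ι : {x // x ∈ Ia} → {J // J ∈ Q},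
            ∑ J ∈ Q, ∑ μ : {y // y ∈ J ∪ fiber Ia (fun x => (ι x : Finset α)) J} → {Kk // Kk ∈ S},
              Finsupp.single (ins (ins P Ia Q ι)
                (J ∪ fiber Ia (fun x => (ι x : Finset α)) J) S μ) (1 : Kf) := by
        simp only [Finset.sum_add_distrib]
    _ = compV Kf (Finsupp.single P 1) (partComp Kf Q S)
        + ∑ Ia ∈ P, ∑ Ib ∈ P.erase Ia,
            ∑ ι : {x // x ∈ Ia} → {J // J ∈ Q},
              ∑ μ : {x // x ∈ Ib} → {Kk // Kk ∈ S},
                Finsupp.single (ins (ins P Ia Q ι) Ib S μ) (1 : Kf) := by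
        have eA : (∑ Ia ∈ P, ∑ ι : {x // x ∈ Ia} → {J // J ∈ Q},
              ∑ Ib ∈ P.erase Ia, ∑ μ : {x // x ∈ Ib} → {Kk // Kk ∈ S},
                Finsupp.single (ins (ins P Ia Q ι) Ib S μ) (1 : Kf))
            = ∑ Ia ∈ P, ∑ Ib ∈ P.erase Ia,
                ∑ ι : {x // x ∈ Ia} → {J // J ∈ Q},
                  ∑ μ : {x // x ∈ Ib} → {Kk // Kk ∈ S},
                    Finsupp.single (ins (ins P Ia Q ι) Ib S μ) (1 : Kf) :=
          Finset.sum_congr rfl fun Ia _ => Finset.sum_comm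
        have eB : (∑ Ia ∈ P, ∑ ι : {x // x ∈ Ia} → {J // J ∈ Q},
              ∑ J ∈ Q, ∑ μ : {y // y ∈ J ∪ fiber Ia (fun x => (ι x : Finset α)) J} → {Kk // Kk ∈ S},
                Finsupp.single (ins (ins P Ia Q ι)
                  (J ∪ fiber Ia (fun x => (ι x : Finset α)) J) S μ) (1 : Kf))
            = compV Kf (Finsupp.single P 1) (partComp Kf Q S) := by
          rw [hR]
          calc (∑ Ia ∈ P, ∑ ι : {x // x ∈ Ia} → {J // J ∈ Q},
                ∑ J ∈ Q, ∑ μ : {y // y ∈ J ∪ fiber Ia (fun x => (ι x : Finset α)) J} → {Kk // Kk ∈ S},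
                  Finsupp.single (ins (ins P Ia Q ι)
                    (J ∪ fiber Ia (fun x => (ι x : Finset α)) J) S μ) (1 : Kf))
              = ∑ Ia ∈ P, ∑ J ∈ Q,
                  ∑ ι : {x // x ∈ Ia} → {J' // J' ∈ Q},
                    ∑ μ : {y // y ∈ J ∪ fiber Ia (fun x => (ι x : Finset α)) J} → {Kk // Kk ∈ S},
                      Finsupp.single (ins (ins P Ia Q ι)
                        (J ∪ fiber Ia (fun x => (ι x : Finset α)) J) S μ) (1 : Kf) :=
                Finset.sum_congr rfl fun Ia _ => Finset.sum_comm
            _ = ∑ Ia ∈ P, ∑ J ∈ Q,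
                  ∑ κ : {y // y ∈ J} → {Kk // Kk ∈ S},
                    ∑ ι' : {x // x ∈ Ia} → {M // M ∈ ins Q J S κ},
                      Finsupp.single (ins P Ia (ins Q J S κ) ι') (1 : Kf) :=
                Finset.sum_congr rfl fun Ia hIa => Finset.sum_congr rfl fun J hJ =>
                  key Kf hP hQ hS hPQ hPS hQS hIa hJ
            _ = ∑ J ∈ Q, ∑ Ia ∈ P,
                  ∑ κ : {y // y ∈ J} → {Kk // Kk ∈ S},
                    ∑ ι' : {x // x ∈ Ia} → {M // M ∈ ins Q J S κ},
                      Finsupp.single (ins P Ia (ins Q J S κ) ι') (1 : Kf) := Finset.sum_comm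
            _ = ∑ J ∈ Q, ∑ κ : {y // y ∈ J} → {Kk // Kk ∈ S},
                  ∑ Ia ∈ P, ∑ ι' : {x // x ∈ Ia} → {M // M ∈ ins Q J S κ},
                    Finsupp.single (ins P Ia (ins Q J S κ) ι') (1 : Kf) :=
                Finset.sum_congr rfl fun J _ => Finset.sum_comm
            _ = ∑ J ∈ Q, ∑ κ : {y // y ∈ J} → {Kk // Kk ∈ S},
                  partComp Kf P (ins Q J S κ) := rfl
        rw [eA, eB, add_comm]

end PartitionOps
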